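/- Let g : ℝ → ℝ be a twice-differentiable solution of y'' + (B/x) y' + C y = 0 on ℝ \ {0} with B, C > 0, extended continuously to ℝ. Define f(x) = g(x)² + g'(x)²/C. Then f'(x) = -2B g'(x)²/(Cx) for x ≠ 0; in particular f is nonnegative, nondecreasing on (-∞, 0) and nonincreasing on (0, ∞). -/

import Mathlib

open MeasureTheory Real Set

theorem sonin_lid (B C : ℝ) (hB : 0 < B) (hC : 0 < C) (g g' : ℝ → ℝ)
    (hgc : Continuous g) (hg'c : Continuous g')
    (hg : ∀ x : ℝ, x ≠ 0 → HasDerivAt g (g' x) x)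
    (hg' : ∀ x : ℝ, x ≠ 0 → HasDerivAt g' (-(B / x) * g' x - C * g x) x) :
    (∀ x : ℝ, x ≠ 0 →
        HasDerivAt (fun x => g x ^ 2 + g' x ^ 2 / C) (-2 * B * g' x ^ 2 / (C * x)) x) ∧
      (∀ x : ℝ, 0 ≤ g x ^ 2 + g' x ^ 2 / C) ∧
      MonotoneOn (fun x => g x ^ 2 + g' x ^ 2 / C) (Set.Iio 0) ∧
      AntitoneOn (fun x => g x ^ 2 + g' x ^ 2 / C) (Set.Ioi 0) := by
  have hC0 : C ≠ 0 := ne_of_gt hC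
  have hderiv : ∀ x : ℝ, x ≠ 0 →
      HasDerivAt (fun x => g x ^ 2 + g' x ^ 2 / C) (-2 * B * g' x ^ 2 / (C * x)) x := by
    intro x hx
    have h1 := ((hg x hx).pow 2).add (((hg' x hx).pow 2).div_const C)
    refine h1.congr_deriv ?_
    field_simp
    ring
  refine ⟨hderiv, fun x => by positivity, ?_, ?_⟩
  · apply monotoneOn_of_deriv_nonneg (convex_Iio 0)
      (Continuous.continuousOn (by continuity))
    · intro x hx
      rw [interior_Iio] at hx
      exact (hderiv x (ne_of_lt hx)).differentiableAt.differentiableWithinAt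
    · intro x hx
      rw [interior_Iio] at hx
      rw [(hderiv x (ne_of_lt hx)).deriv]
      have hx0 : x < 0 := hx
      have : C * x < 0 := mul_neg_of_pos_of_neg hC hx0
      rw [div_nonneg_iff]
      right
      constructor
      · nlinarith [sq_nonneg (g' x)]
      · exact this.le
  · apply antitoneOn_of_deriv_nonpos (convex_Ioi 0)
      (Continuous.continuousOn (by continuity))
    · intro x hx
      rw [interior_Ioi] at hx
      exact (hderiv x (ne_of_gt hx)).differentiableAt.differentiableWithinAt
    · intro x hx
      rw [interior_Ioi] at hx
      rw [(hderiv x (ne_of_gt hx)).deriv]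
      have : 0 < C * x := mul_pos hC hx
      apply div_nonpos_of_nonpos_of_nonneg _ this.le
      nlinarith [sq_nonneg (g' x)]
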